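/- arXiv:2507.12906 — 10 statements merged into one kernel-verified Lean document; each statement's English description precedes it below -/
import Mathlib

section
/- Let b ≥ 2 be an integer and let g = 2, so that necessarily d₁ = d₂ = 1. If (l, m, n) with l, m ≥ 1 and n ≥ 0 is a solution of (b+ε₁)·b^n + ε₂ = (2^l − 1) + ε₃·(2^m − 1) for some signs ε₁, ε₂, ε₃ ∈ {1, −1}, then n = 0; in particular such a solution exists only when b is of the form b = (2^l − 1) + ε₃·(2^m − 1) − ε₁ − ε₂ for some positive integers l, m. -/
/-- Lemma (case `g = 2`): if `(b + ε₁)·b^n + ε₂ = (2^l − 1) + ε₃·(2^m − 1)` with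
`b ≥ 2`, `l, m ≥ 1`, `n ≥ 0` and signs `ε₁, ε₂, ε₃ ∈ {1, −1}`, then `n = 0`;
in particular `b = (2^l − 1) + ε₃·(2^m − 1) − ε₁ − ε₂`. -/
theorem stmt_5 (b : ℤ) (hb : 2 ≤ b)
    (ε₁ ε₂ ε₃ : ℤ) (hε₁ : ε₁ = 1 ∨ ε₁ = -1) (hε₂ : ε₂ = 1 ∨ ε₂ = -1)
    (hε₃ : ε₃ = 1 ∨ ε₃ = -1) (l m n : ℕ) (hl : 1 ≤ l) (hm : 1 ≤ m)
    (heq : (b + ε₁) * b ^ n + ε₂ = ((2 : ℤ) ^ l - 1) + ε₃ * ((2 : ℤ) ^ m - 1)) :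
    n = 0 ∧ b = ((2 : ℤ) ^ l - 1) + ε₃ * ((2 : ℤ) ^ m - 1) - ε₁ - ε₂ := by
  have hn : n = 0 := by
    by_contra hn
    obtain ⟨k, rfl⟩ : ∃ k, n = k + 1 := ⟨n - 1, by omega⟩
    have h2l : (2 : ℤ) ∣ 2 ^ l := dvd_pow_self 2 (by omega)
    have h2m : (2 : ℤ) ∣ 2 ^ m := dvd_pow_self 2 (by omega)
    have hbb : (2 : ℤ) ∣ (b + ε₁) * b ^ (k + 1) := by
      rcases Int.even_or_odd b with ⟨c, hc⟩ | ⟨c, hc⟩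
      · exact Dvd.dvd.mul_left ⟨c * b ^ k, by rw [pow_succ, hc]; ring⟩ _
      · rcases hε₁ with rfl | rfl
        · exact Dvd.dvd.mul_right ⟨c + 1, by rw [hc]; ring⟩ _
        · exact Dvd.dvd.mul_right ⟨c, by rw [hc]; ring⟩ _
    have key : (2 : ℤ) ∣ ε₂ + 1 + ε₃ := by
      have : ε₂ + 1 + ε₃ = 2 ^ l + ε₃ * 2 ^ m - (b + ε₁) * b ^ (k + 1) := by
        linarith [heq]
      rw [this]
      exact dvd_sub (dvd_add h2l (h2m.mul_left ε₃)) hbb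
    rcases hε₂ with rfl | rfl <;> rcases hε₃ with rfl | rfl <;> omega
  subst hn
  simp only [pow_zero, mul_one] at heq
  exact ⟨rfl, by linarith⟩
end

section
/- Let b ≥ 2 and g ≥ 3 be integers and ε₁, ε₂ ∈ {1, −1}. Every solution (d₁, d₂, l, m, n) in integers 1 ≤ d₁, d₂ ≤ g−1, n ≥ 0, 1 ≤ l ≤ m of the equation (b+ε₁)·b^n + ε₂ = d₁·(g^l−1)/(g−1) + d₂·(g^m−1)/(g−1) satisfies n < 2.5·m·log g. -/
/-- The equation expressing a Thabit (`ε₁ = 1`) or Williams (`ε₁ = −1`) number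
`(b + ε₁)·b^n + ε₂` as a sum of two `g`-repdigits. -/
def SumRepdigitEq (b g ε₁ ε₂ d₁ d₂ : ℤ) (l m n : ℕ) : Prop :=
  (b + ε₁) * b ^ n + ε₂ = d₁ * ((g ^ l - 1) / (g - 1)) + d₂ * ((g ^ m - 1) / (g - 1))

/-- Lemma: every solution of the sum equation with `b ≥ 2`, `g ≥ 3`,
`1 ≤ d₁, d₂ ≤ g−1`, `1 ≤ l ≤ m`, `n ≥ 0` satisfies `n < 2.5·m·log g`. -/
theorem stmt_6 (b g : ℤ) (hb : 2 ≤ b) (hg : 3 ≤ g)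
    (ε₁ ε₂ : ℤ) (hε₁ : ε₁ = 1 ∨ ε₁ = -1) (hε₂ : ε₂ = 1 ∨ ε₂ = -1)
    (d₁ d₂ : ℤ) (l m n : ℕ)
    (hd₁ : 1 ≤ d₁) (hd₁' : d₁ ≤ g - 1) (hd₂ : 1 ≤ d₂) (hd₂' : d₂ ≤ g - 1)
    (hl : 1 ≤ l) (hlm : l ≤ m)
    (heq : SumRepdigitEq b g ε₁ ε₂ d₁ d₂ l m n) :
    (n : ℝ) < 2.5 * m * Real.log g := by
  have hg1 : (1 : ℤ) ≤ g := by linarith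
  -- divisibility and bounds for the repdigit terms
  have key : ∀ k : ℕ, k ≤ m → d₁ * ((g ^ k - 1) / (g - 1)) ≤ g ^ m - 1 := by
    intro k hk
    have hdvd : (g - 1) ∣ g ^ k - 1 := by
      simpa using sub_dvd_pow_sub_pow g 1 k
    have hq : (g ^ k - 1) / (g - 1) * (g - 1) = g ^ k - 1 := Int.ediv_mul_cancel hdvd
    have hq0 : 0 ≤ (g ^ k - 1) / (g - 1) :=
      Int.ediv_nonneg (by nlinarith [one_le_pow₀ (show (1:ℤ) ≤ g by linarith) (n := k)]) (by linarith)
    have h1 : d₁ * ((g ^ k - 1) / (g - 1)) ≤ (g - 1) * ((g ^ k - 1) / (g - 1)) :=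
      mul_le_mul_of_nonneg_right hd₁' hq0
    have h2 : (g - 1) * ((g ^ k - 1) / (g - 1)) = g ^ k - 1 := by linarith [hq]
    have h3 : g ^ k ≤ g ^ m := pow_le_pow_right₀ hg1 hk
    linarith
  have key2 : ∀ k : ℕ, k ≤ m → d₂ * ((g ^ k - 1) / (g - 1)) ≤ g ^ m - 1 := by
    intro k hk
    have hdvd : (g - 1) ∣ g ^ k - 1 := by
      simpa using sub_dvd_pow_sub_pow g 1 k
    have hq : (g ^ k - 1) / (g - 1) * (g - 1) = g ^ k - 1 := Int.ediv_mul_cancel hdvd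
    have hq0 : 0 ≤ (g ^ k - 1) / (g - 1) :=
      Int.ediv_nonneg (by nlinarith [one_le_pow₀ (show (1:ℤ) ≤ g by linarith) (n := k)]) (by linarith)
    have h1 : d₂ * ((g ^ k - 1) / (g - 1)) ≤ (g - 1) * ((g ^ k - 1) / (g - 1)) :=
      mul_le_mul_of_nonneg_right hd₂' hq0
    have h3 : g ^ k ≤ g ^ m := pow_le_pow_right₀ hg1 hk
    linarith
  have hbn : (1 : ℤ) ≤ b ^ n := one_le_pow₀ (by linarith)
  have hLHS : b ^ n - 1 ≤ (b + ε₁) * b ^ n + ε₂ := by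
    have hε₁' : 1 ≤ b + ε₁ := by rcases hε₁ with h | h <;> simp [h] <;> linarith
    have hε₂' : -1 ≤ ε₂ := by rcases hε₂ with h | h <;> simp [h]
    nlinarith
  have hmain : b ^ n ≤ 2 * g ^ m := by
    unfold SumRepdigitEq at heq
    have := key l hlm
    have := key2 m le_rfl
    linarith
  -- pass to reals
  have hmainR : ((b : ℝ)) ^ n ≤ 2 * (g : ℝ) ^ m := by exact_mod_cast hmain
  have hbR : (2 : ℝ) ≤ (b : ℝ) := by exact_mod_cast hb
  have hgR : (3 : ℝ) ≤ (g : ℝ) := by exact_mod_cast hg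
  have hbpos : (0 : ℝ) < (b : ℝ) ^ n := pow_pos (by linarith) n
  have hlog : Real.log ((b : ℝ) ^ n) ≤ Real.log (2 * (g : ℝ) ^ m) :=
    Real.log_le_log hbpos hmainR
  rw [Real.log_pow, Real.log_mul (by norm_num) (by positivity), Real.log_pow] at hlog
  have hlogb : Real.log 2 ≤ Real.log (b : ℝ) := Real.log_le_log (by norm_num) hbR
  have hlogg : Real.log 3 ≤ Real.log (g : ℝ) := Real.log_le_log (by norm_num) hgR
  have hlog3 : (1 : ℝ) < Real.log 3 := by
    rw [show (1:ℝ) = Real.log (Real.exp 1) by simp]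
    exact Real.log_lt_log (Real.exp_pos 1) (by linarith [Real.exp_one_lt_d9])
  have hX : (1 : ℝ) < (m : ℝ) * Real.log (g : ℝ) := by
    have hm : (1 : ℝ) ≤ (m : ℝ) := by exact_mod_cast (hl.trans hlm)
    nlinarith
  have hl2lo : (0.6931471803 : ℝ) < Real.log 2 := Real.log_two_gt_d9
  have hl2hi : Real.log 2 < 0.6931471808 := Real.log_two_lt_d9
  have hn2 : (n : ℝ) * Real.log 2 ≤ Real.log 2 + (m : ℝ) * Real.log (g : ℝ) := by
    have hn0 : (0 : ℝ) ≤ (n : ℝ) := Nat.cast_nonneg n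
    nlinarith
  nlinarith [mul_pos (sub_pos.mpr hX) (show (0:ℝ) < 2.5 * Real.log 2 - 1 by nlinarith)]
end

section
/- Let b ≥ 2 and g ≥ 3 be integers and ε₁, ε₂ ∈ {1, −1}. Every solution (d₁, d₂, l, m, n) in integers 1 ≤ d₁, d₂ ≤ g−1, n ≥ 0, 1 ≤ l ≤ m of the equation (b+ε₁)·b^n + ε₂ = d₁·(g^l−1)/(g−1) + d₂·(g^m−1)/(g−1) satisfies l ≤ m < 1.3·(n + 1.6)·(log b)/(log g) + 1. -/
lemma rep_div_eq_sum (g : ℤ) (hg : 2 ≤ g) (k : ℕ) :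
    (g ^ k - 1) / (g - 1) = ∑ i ∈ Finset.range k, g ^ i := by
  have h : g - 1 ≠ 0 := by omega
  rw [← geom_sum_mul, Int.mul_ediv_cancel _ h]

/-- Lemma: every solution of the sum equation with `b ≥ 2`, `g ≥ 3`,
`1 ≤ d₁, d₂ ≤ g−1`, `1 ≤ l ≤ m`, `n ≥ 0` satisfies
`l ≤ m < 1.3·(n + 1.6)·(log b)/(log g) + 1`. -/
theorem stmt_7 (b g : ℤ) (hb : 2 ≤ b) (hg : 3 ≤ g)
    (ε₁ ε₂ : ℤ) (hε₁ : ε₁ = 1 ∨ ε₁ = -1) (hε₂ : ε₂ = 1 ∨ ε₂ = -1)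
    (d₁ d₂ : ℤ) (l m n : ℕ)
    (hd₁ : 1 ≤ d₁) (hd₁' : d₁ ≤ g - 1) (hd₂ : 1 ≤ d₂) (hd₂' : d₂ ≤ g - 1)
    (hl : 1 ≤ l) (hlm : l ≤ m)
    (heq : SumRepdigitEq b g ε₁ ε₂ d₁ d₂ l m n) :
    (m : ℝ) < 1.3 * ((n : ℝ) + 1.6) * (Real.log b / Real.log g) + 1 := by
  have hg2 : (2:ℤ) ≤ g := by omega
  rw [SumRepdigitEq, rep_div_eq_sum g hg2 l, rep_div_eq_sum g hg2 m] at heq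
  have hgnn : (0:ℤ) ≤ g := by omega
  have hrl : (1:ℤ) ≤ ∑ i ∈ Finset.range l, g ^ i := by
    calc (1:ℤ) = g ^ 0 := by ring
    _ ≤ ∑ i ∈ Finset.range l, g ^ i :=
      Finset.single_le_sum (fun i _ => pow_nonneg hgnn i) (Finset.mem_range.mpr (by omega))
  have hrm : g ^ (m - 1) ≤ ∑ i ∈ Finset.range m, g ^ i :=
    Finset.single_le_sum (fun i _ => pow_nonneg hgnn i) (Finset.mem_range.mpr (by omega))
  have hpm : (0:ℤ) ≤ g ^ (m - 1) := pow_nonneg hgnn _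
  have hlow : 1 + g ^ (m - 1) ≤ (b + ε₁) * b ^ n + ε₂ := by
    rw [heq]
    have h1 : (1:ℤ) * 1 ≤ d₁ * ∑ i ∈ Finset.range l, g ^ i :=
      mul_le_mul hd₁ hrl (by norm_num) (by omega)
    have h2 : (1:ℤ) * g ^ (m - 1) ≤ d₂ * ∑ i ∈ Finset.range m, g ^ i :=
      mul_le_mul hd₂ hrm hpm (by omega)
    linarith
  have hpb : (1:ℤ) ≤ b ^ n := one_le_pow₀ (by omega)
  have hup : (b + ε₁) * b ^ n + ε₂ ≤ b ^ (n + 2) := by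
    have h1 : (b + ε₁) * b ^ n ≤ (b + 1) * b ^ n := by
      have : ε₁ ≤ 1 := by omega
      exact mul_le_mul_of_nonneg_right (by omega) (by linarith)
    have h2 : (b + 1) * b ^ n + 1 ≤ b ^ (n + 2) := by
      have he : b ^ (n + 2) = b ^ n * (b * b) := by ring
      have hq : (1:ℤ) ≤ b * b - b - 1 := by nlinarith
      have := mul_le_mul hpb hq (by norm_num) (pow_nonneg (by omega) n)
      nlinarith
    have : ε₂ ≤ 1 := by omega
    linarith
  have hkey : g ^ (m - 1) < b ^ (n + 2) := by linarith
  have hgr : (1:ℝ) < (g:ℝ) := by exact_mod_cast (by omega : (1:ℤ) < g)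
  have hbr : (1:ℝ) < (b:ℝ) := by exact_mod_cast (by omega : (1:ℤ) < b)
  have hR : (g:ℝ) ^ (m - 1) < (b:ℝ) ^ (n + 2) := by exact_mod_cast hkey
  have hlog0 := Real.log_lt_log (pow_pos (by linarith) (m - 1)) hR
  rw [Real.log_pow, Real.log_pow] at hlog0
  have hm1 : ((m - 1 : ℕ) : ℝ) = (m:ℝ) - 1 := by
    rw [Nat.cast_sub (by omega)]; norm_num
  have hlog : ((m:ℝ) - 1) * Real.log g < ((n:ℝ) + 2) * Real.log b := by
    rw [hm1] at hlog0
    push_cast at hlog0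
    linarith
  have hlg : 0 < Real.log g := Real.log_pos hgr
  have hlb : 0 < Real.log b := Real.log_pos hbr
  have h1 : (m:ℝ) - 1 < ((n:ℝ) + 2) * Real.log b / Real.log g :=
    (lt_div_iff₀ hlg).mpr hlog
  have h2 : ((n:ℝ) + 2) ≤ 1.3 * ((n:ℝ) + 1.6) := by
    have : (0:ℝ) ≤ (n:ℝ) := Nat.cast_nonneg n
    nlinarith
  have h3 : ((n:ℝ) + 2) * (Real.log b / Real.log g)
      ≤ 1.3 * ((n:ℝ) + 1.6) * (Real.log b / Real.log g) :=
    mul_le_mul_of_nonneg_right h2 (le_of_lt (div_pos hlb hlg))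
  have h4 : ((n:ℝ) + 2) * Real.log b / Real.log g = ((n:ℝ) + 2) * (Real.log b / Real.log g) := by
    ring
  linarith [h1, h3, h4 ▸ h1]
end

section
/- Let b ≥ 2 and g ≥ 3 be integers and ε₁, ε₂ ∈ {1, −1}. Suppose (d₁, d₂, l, m, n) with 1 ≤ d₁, d₂ ≤ g−1, n ≥ 0, 1 ≤ l ≤ m is a solution of (b+ε₁)·b^n + ε₂ = d₁·(g^l−1)/(g−1) + d₂·(g^m−1)/(g−1) which in addition satisfies (b+ε₁)·b^n·(g−1) = d₂·g^m. Then d₂ = g−1, l = 1, d₁ = 2, ε₂ = 1 and (b+ε₁)·b^n = g^m. Moreover, if b + ε₁ ≥ 2 (i.e. excluding the case b = 2, ε₁ = −1, where there are infinitely many such solutions with g a power of 2), then m ≤ log(b+ε₁)/log 2. -/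
/-- Lemma (vanishing of `Λ₁`): if a solution of the sum equation moreover satisfies
`(b + ε₁)·b^n·(g−1) = d₂·g^m`, then `d₂ = g−1`, `l = 1`, `d₁ = 2`, `ε₂ = 1` and
`(b + ε₁)·b^n = g^m`; moreover if `b + ε₁ ≥ 2` then `m ≤ log(b + ε₁)/log 2`. -/
theorem stmt_8 (b g : ℤ) (hb : 2 ≤ b) (hg : 3 ≤ g)
    (ε₁ ε₂ : ℤ) (hε₁ : ε₁ = 1 ∨ ε₁ = -1) (hε₂ : ε₂ = 1 ∨ ε₂ = -1)
    (d₁ d₂ : ℤ) (l m n : ℕ)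
    (hd₁ : 1 ≤ d₁) (hd₁' : d₁ ≤ g - 1) (hd₂ : 1 ≤ d₂) (hd₂' : d₂ ≤ g - 1)
    (hl : 1 ≤ l) (hlm : l ≤ m)
    (heq : SumRepdigitEq b g ε₁ ε₂ d₁ d₂ l m n)
    (hΛ₁ : (b + ε₁) * b ^ n * (g - 1) = d₂ * g ^ m) :
    d₂ = g - 1 ∧ l = 1 ∧ d₁ = 2 ∧ ε₂ = 1 ∧ (b + ε₁) * b ^ n = g ^ m ∧
      (2 ≤ b + ε₁ → (m : ℝ) ≤ Real.log (b + ε₁) / Real.log 2) := by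
  have hg1 : (0:ℤ) < g - 1 := by linarith
  have hgne : g - 1 ≠ 0 := ne_of_gt hg1
  -- Step 1: d₂ = g - 1
  have hcop : IsCoprime (g - 1) g := ⟨-1, 1, by ring⟩
  have hdvd : (g - 1) ∣ d₂ * g ^ m := ⟨(b + ε₁) * b ^ n, by linarith [hΛ₁]⟩
  have hdvd2 : (g - 1) ∣ d₂ := (hcop.pow_right).dvd_of_dvd_mul_right hdvd
  have hd2 : d₂ = g - 1 := le_antisymm hd₂' (Int.le_of_dvd (by linarith) hdvd2)
  -- Step 2: (b+ε₁)·b^n = g^m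
  have hmain : (b + ε₁) * b ^ n = g ^ m := by
    have h1 : ((b + ε₁) * b ^ n) * (g - 1) = g ^ m * (g - 1) := by
      rw [hd2] at hΛ₁; linarith [hΛ₁]
    exact mul_right_cancel₀ hgne h1
  -- repunits
  have hdl : (g - 1) ∣ g ^ l - 1 := by simpa using sub_dvd_pow_sub_pow g 1 l
  have hdm : (g - 1) ∣ g ^ m - 1 := by simpa using sub_dvd_pow_sub_pow g 1 m
  have hRm : (g - 1) * ((g ^ m - 1) / (g - 1)) = g ^ m - 1 := Int.mul_ediv_cancel' hdm
  set Rl := (g ^ l - 1) / (g - 1) with hRldef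
  have hRl : (g - 1) * Rl = g ^ l - 1 := Int.mul_ediv_cancel' hdl
  have hgl : g ≤ g ^ l := by
    calc g = g ^ 1 := (pow_one g).symm
    _ ≤ g ^ l := pow_le_pow_right₀ (by linarith) hl
  have hRlpos : 1 ≤ Rl := by nlinarith [hRl, hgl]
  have hkey : d₁ * Rl = ε₂ + 1 := by
    unfold SumRepdigitEq at heq
    rw [hd2, hmain] at heq
    linarith [heq, hRm]
  -- Step 3: ε₂ = 1
  have hε2 : ε₂ = 1 := by
    rcases hε₂ with h | h
    · exact h
    · exfalso; rw [h] at hkey; nlinarith [hkey, hd₁, hRlpos]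
  have hkey2 : d₁ * Rl = 2 := by rw [hε2] at hkey; linarith
  -- Step 4: l = 1
  have hl1 : l = 1 := by
    by_contra hne
    have hl2 : 2 ≤ l := by omega
    have hgl2 : g ^ 2 ≤ g ^ l := pow_le_pow_right₀ (by linarith) hl2
    have hRl2 : Rl ≤ 2 := by nlinarith [hkey2, hd₁, hRlpos]
    nlinarith [hRl, hgl2, hRl2, hg1]
  -- Step 5: d₁ = 2
  have hRl1 : Rl = 1 := by
    have : (g - 1) * Rl = (g - 1) * 1 := by
      rw [hRl, hl1]; ring
    exact mul_left_cancel₀ hgne this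
  have hd1 : d₁ = 2 := by rw [hRl1] at hkey2; linarith
  refine ⟨hd2, hl1, hd1, hε2, hmain, fun hbe => ?_⟩
  -- Step 6: the bound on m
  have hbpos : (0:ℤ) < b + ε₁ := by linarith
  set A := (b + ε₁).natAbs with hA
  set B := b.natAbs with hB
  set G := g.natAbs with hG
  have hAB : A * B ^ n = G ^ m := by
    have := congrArg Int.natAbs hmain
    simpa [Int.natAbs_mul, Int.natAbs_pow] using this
  have hcopZ : IsCoprime (b + ε₁) b := by
    rcases hε₁ with h | h
    · exact ⟨1, -1, by rw [h]; ring⟩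
    · exact ⟨-1, 1, by rw [h]; ring⟩
  have hcopN : Nat.Coprime A B := by
    rw [Nat.Coprime, ← Int.gcd]
    exact Int.isCoprime_iff_gcd_eq_one.mp hcopZ
  have hcopN' : Nat.Coprime A (B ^ n) := hcopN.pow_right n
  obtain ⟨c, hc⟩ : ∃ c : ℕ, A = c ^ m :=
    exists_eq_pow_of_mul_eq_pow (by rwa [Nat.isUnit_iff]) hAB
  have hA2 : 2 ≤ A := by
    have : (A : ℤ) = b + ε₁ := Int.natAbs_of_nonneg (le_of_lt hbpos)
    omega
  have hc2 : 2 ≤ c := by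
    rcases Nat.lt_or_ge c 2 with h | h
    · exfalso
      have hle : A ≤ 1 := by
        rw [hc]
        calc c ^ m ≤ 1 ^ m := Nat.pow_le_pow_left (by omega) m
        _ = 1 := one_pow m
      omega
    · exact h
  have h2m : (2:ℤ) ^ m ≤ b + ε₁ := by
    have h1 : 2 ^ m ≤ A := by rw [hc]; exact Nat.pow_le_pow_left hc2 m
    have h2 : (A : ℤ) = b + ε₁ := Int.natAbs_of_nonneg (le_of_lt hbpos)
    calc (2:ℤ) ^ m = ((2 ^ m : ℕ) : ℤ) := by push_cast; ring
    _ ≤ (A : ℤ) := by exact_mod_cast h1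
    _ = b + ε₁ := h2
  have h2mR : (2:ℝ) ^ m ≤ ((b + ε₁ : ℤ) : ℝ) := by exact_mod_cast h2m
  have hlog : Real.log ((2:ℝ) ^ m) ≤ Real.log ((b + ε₁ : ℤ) : ℝ) :=
    Real.log_le_log (by positivity) h2mR
  rw [Real.log_pow] at hlog
  have hlog2 : (0:ℝ) < Real.log 2 := Real.log_pos (by norm_num)
  rw [le_div_iff₀ hlog2]
  convert hlog using 2 <;> push_cast <;> rfl
end

section
/- Let b ≥ 2 and g ≥ 3 be integers and ε₁, ε₂ ∈ {1, −1}. Every solution (d₁, d₂, l, m, n) in integers 1 ≤ d₁, d₂ ≤ g−1, n ≥ 0, l, m ≥ 1 of the equation (b+ε₁)·b^n + ε₂ = d₁·(g^l−1)/(g−1) − d₂·(g^m−1)/(g−1) satisfies n < 1.5·l·log g. -/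
/-- The equation expressing a Thabit (`ε₁ = 1`) or Williams (`ε₁ = −1`) number
`(b + ε₁)·b^n + ε₂` as a difference of two `g`-repdigits. -/
def DiffRepdigitEq (b g ε₁ ε₂ d₁ d₂ : ℤ) (l m n : ℕ) : Prop :=
  (b + ε₁) * b ^ n + ε₂ = d₁ * ((g ^ l - 1) / (g - 1)) - d₂ * ((g ^ m - 1) / (g - 1))

/-- Lemma: every solution of the difference equation satisfies `n < 1.5·l·log g`. -/
theorem stmt_11 (b g : ℤ) (hb : 2 ≤ b) (hg : 3 ≤ g)
    (ε₁ ε₂ : ℤ) (hε₁ : ε₁ = 1 ∨ ε₁ = -1) (hε₂ : ε₂ = 1 ∨ ε₂ = -1)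
    (d₁ d₂ : ℤ) (l m n : ℕ)
    (hd₁ : 1 ≤ d₁) (hd₁' : d₁ ≤ g - 1) (hd₂ : 1 ≤ d₂) (hd₂' : d₂ ≤ g - 1)
    (hl : 1 ≤ l) (hm : 1 ≤ m)
    (heq : DiffRepdigitEq b g ε₁ ε₂ d₁ d₂ l m n) :
    (n : ℝ) < 1.5 * l * Real.log g := by
  have hg1 : (2:ℤ) ≤ g - 1 := by linarith
  have hdl : (g - 1) ∣ (g ^ l - 1) := by
    simpa using sub_dvd_pow_sub_pow g 1 l
  have hdm : (g - 1) ∣ (g ^ m - 1) := by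
    simpa using sub_dvd_pow_sub_pow g 1 m
  set A := (g ^ l - 1) / (g - 1) with hA
  set B := (g ^ m - 1) / (g - 1) with hB
  have hAe : (g - 1) * A = g ^ l - 1 := Int.mul_ediv_cancel' hdl
  have hBe : (g - 1) * B = g ^ m - 1 := Int.mul_ediv_cancel' hdm
  have hgl : g ≤ g ^ l := le_self_pow₀ (by linarith) (by omega)
  have hgm : g ≤ g ^ m := le_self_pow₀ (by linarith) (by omega)
  have hA1 : 1 ≤ A := by nlinarith
  have hB1 : 1 ≤ B := by nlinarith
  have hd₁A : d₁ * A ≤ g ^ l - 1 := by nlinarith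
  have hd₂B : 1 ≤ d₂ * B := by nlinarith
  have hbn : (2:ℤ) ^ n ≤ b ^ n := pow_le_pow_left₀ (by norm_num) hb n
  have hbn1 : (1:ℤ) ≤ b ^ n := one_le_pow₀ (by linarith)
  have hLHS : (2:ℤ) ^ n - 1 ≤ (b + ε₁) * b ^ n + ε₂ := by
    have hε₁' : 1 ≤ b + ε₁ := by rcases hε₁ with h | h <;> simp [h] <;> linarith
    have hε₂' : -1 ≤ ε₂ := by rcases hε₂ with h | h <;> simp [h]
    nlinarith
  have hkey : (2:ℤ) ^ n < g ^ l := by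
    unfold DiffRepdigitEq at heq
    rw [← hA, ← hB] at heq
    omega
  have hkeyR : (2:ℝ) ^ n < (g:ℝ) ^ l := by
    have := (@Int.cast_lt ℝ _ _ _).2 hkey
    push_cast at this
    exact this
  have hlog : (n:ℝ) * Real.log 2 < (l:ℝ) * Real.log g := by
    have h2 : (0:ℝ) < 2 ^ n := by positivity
    have := Real.log_lt_log h2 hkeyR
    rwa [Real.log_pow, Real.log_pow] at this
  have hlog2 : (0.6931471803:ℝ) < Real.log 2 := Real.log_two_gt_d9
  have hn0 : (0:ℝ) ≤ (n:ℝ) := Nat.cast_nonneg n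
  nlinarith [mul_nonneg hn0 (le_of_lt (lt_trans (by norm_num) hlog2))]
end

section
/- Let b ≥ 2 and g ≥ 3 be integers and ε₁, ε₂ ∈ {1, −1}. No solution (d₁, d₂, l, m, n) in integers 1 ≤ d₁, d₂ ≤ g−1, n ≥ 0, l, m ≥ 1 of the equation (b+ε₁)·b^n + ε₂ = d₁·(g^l−1)/(g−1) − d₂·(g^m−1)/(g−1) satisfies (b+ε₁)·b^n·(g−1) = d₁·g^l. -/
/-- Lemma (`Λ₃ ≠ 0`): no solution of the difference equation satisfies
`(b + ε₁)·b^n·(g−1) = d₁·g^l`. -/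
theorem stmt_13 (b g : ℤ) (hb : 2 ≤ b) (hg : 3 ≤ g)
    (ε₁ ε₂ : ℤ) (hε₁ : ε₁ = 1 ∨ ε₁ = -1) (hε₂ : ε₂ = 1 ∨ ε₂ = -1)
    (d₁ d₂ : ℤ) (l m n : ℕ)
    (hd₁ : 1 ≤ d₁) (hd₁' : d₁ ≤ g - 1) (hd₂ : 1 ≤ d₂) (hd₂' : d₂ ≤ g - 1)
    (hl : 1 ≤ l) (hm : 1 ≤ m)
    (heq : DiffRepdigitEq b g ε₁ ε₂ d₁ d₂ l m n) :
    (b + ε₁) * b ^ n * (g - 1) ≠ d₁ * g ^ l := by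
  intro h
  unfold DiffRepdigitEq at heq
  have hdl : (g - 1) ∣ (g ^ l - 1) := by
    simpa using sub_dvd_pow_sub_pow g 1 l
  have hdm : (g - 1) ∣ (g ^ m - 1) := by
    simpa using sub_dvd_pow_sub_pow g 1 m
  have hl' : (g ^ l - 1) / (g - 1) * (g - 1) = g ^ l - 1 := Int.ediv_mul_cancel hdl
  have hm' : (g ^ m - 1) / (g - 1) * (g - 1) = g ^ m - 1 := Int.ediv_mul_cancel hdm
  have key : ((b + ε₁) * b ^ n + ε₂) * (g - 1) = d₁ * (g ^ l - 1) - d₂ * (g ^ m - 1) := by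
    rw [heq, sub_mul, mul_assoc, mul_assoc, hl', hm']
  have hgm : g ^ 1 ≤ g ^ m := pow_le_pow_right₀ (by linarith) hm
  simp only [pow_one] at hgm
  have key2 : ε₂ * (g - 1) = -d₁ - d₂ * (g ^ m - 1) := by nlinarith [key, h]
  rcases hε₂ with rfl | rfl <;> nlinarith [key2, hgm, hd₂, hd₁]
end

section
/- Let b ≥ 2 and g ≥ 3 be integers and ε₁, ε₂ ∈ {1, −1}. No solution (d₁, d₂, l, m, n) in integers 1 ≤ d₁, d₂ ≤ g−1, n ≥ 0, l, m ≥ 1 of the equation (b+ε₁)·b^n + ε₂ = d₁·(g^l−1)/(g−1) − d₂·(g^m−1)/(g−1) satisfies (g−1)·(b+ε₁)·b^n = d₁·g^l − d₂·g^m. -/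
/-- Lemma (`Λ₄ ≠ 0`): no solution of the difference equation satisfies
`(g−1)·(b + ε₁)·b^n = d₁·g^l − d₂·g^m`. -/
theorem stmt_14 (b g : ℤ) (hb : 2 ≤ b) (hg : 3 ≤ g)
    (ε₁ ε₂ : ℤ) (hε₁ : ε₁ = 1 ∨ ε₁ = -1) (hε₂ : ε₂ = 1 ∨ ε₂ = -1)
    (d₁ d₂ : ℤ) (l m n : ℕ)
    (hd₁ : 1 ≤ d₁) (hd₁' : d₁ ≤ g - 1) (hd₂ : 1 ≤ d₂) (hd₂' : d₂ ≤ g - 1)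
    (hl : 1 ≤ l) (hm : 1 ≤ m)
    (heq : DiffRepdigitEq b g ε₁ ε₂ d₁ d₂ l m n) :
    (g - 1) * ((b + ε₁) * b ^ n) ≠ d₁ * g ^ l - d₂ * g ^ m := by
  intro h
  have hdl : (g - 1) ∣ g ^ l - 1 := by
    simpa using sub_dvd_pow_sub_pow g 1 l
  have hdm : (g - 1) ∣ g ^ m - 1 := by
    simpa using sub_dvd_pow_sub_pow g 1 m
  have e1 : (g - 1) * ((g ^ l - 1) / (g - 1)) = g ^ l - 1 := Int.mul_ediv_cancel' hdl
  have e2 : (g - 1) * ((g ^ m - 1) / (g - 1)) = g ^ m - 1 := Int.mul_ediv_cancel' hdm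
  unfold DiffRepdigitEq at heq
  have key : (g - 1) * ((b + ε₁) * b ^ n + ε₂) = d₁ * (g ^ l - 1) - d₂ * (g ^ m - 1) := by
    linear_combination (g - 1) * heq + d₁ * e1 - d₂ * e2
  have hfin : (g - 1) * ε₂ = d₂ - d₁ := by linear_combination key - h
  rcases hε₂ with rfl | rfl <;> nlinarith [hfin]
end

section
/- Let M be a positive integer, let τ be an irrational real number, and let p/q be a convergent of the continued fraction expansion of τ with q > 6M. Let A, B, μ be real numbers with A > 0 and B > 1, and set ε := ‖μq‖ − M·‖τq‖, where ‖x‖ denotes the distance from the real number x to the nearest integer. If ε > 0, then there exist no positive integers m, n, w with m ≤ M and w ≥ log(Aq/ε)/log B satisfying 0 < |m·τ − n + μ| < A·B^{−w}. -/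
/-- `‖x‖`: the distance from the real number `x` to the nearest integer. -/
noncomputable def distNearestInt (x : ℝ) : ℝ := |x - round x|

lemma distNearestInt_le (x : ℝ) (k : ℤ) : distNearestInt x ≤ |x - (k : ℝ)| := by
  unfold distNearestInt
  rcases eq_or_ne k (round x) with h | h
  · simp [h]
  · have h1 : |x - (round x : ℝ)| ≤ 1 / 2 := abs_sub_round x
    have h2 : (1 : ℝ) ≤ |((k : ℝ)) - (round x : ℝ)| := by
      have hz : k - round x ≠ 0 := sub_ne_zero.mpr h
      have := Int.one_le_abs hz
      have : (1 : ℝ) ≤ |((k - round x : ℤ) : ℝ)| := by exact_mod_cast this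
      simpa [Int.cast_sub] using this
    have h3 : |(k : ℝ) - (round x : ℝ)| ≤ |(k : ℝ) - x| + |x - (round x : ℝ)| :=
      abs_sub_le _ _ _
    have h4 : |(k : ℝ) - x| = |x - (k : ℝ)| := abs_sub_comm _ _
    linarith

lemma distNearestInt_nonneg (x : ℝ) : 0 ≤ distNearestInt x := abs_nonneg _

/-- Baker–Davenport reduction (part a), Bravo–Gómez–Luca form): let `M` be a
positive integer, `τ` irrational, `p/q` a convergent of `τ` (so `q > 0`,
`gcd(p,q) = 1` and `|p − qτ| < 1/q`) with `q > 6M`, let `A > 0`, `B > 1` and `μ`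
be reals, and set `ε = ‖μq‖ − M·‖τq‖`. If `ε > 0` then there are no positive
integers `m, n, w` with `m ≤ M`, `w ≥ log(Aq/ε)/log B` and
`0 < |mτ − n + μ| < A·B^(−w)`. -/
theorem stmt_15 (M : ℕ) (hM : 0 < M) (τ : ℝ) (hτ : Irrational τ)
    (p q : ℤ) (hq : 0 < q) (hpq : Int.gcd p q = 1)
    (hconv : |(p : ℝ) - (q : ℝ) * τ| < 1 / (q : ℝ)) (hqM : 6 * (M : ℤ) < q)
    (A B μ : ℝ) (hA : 0 < A) (hB : 1 < B)
    (hε : 0 < distNearestInt (μ * q) - M * distNearestInt (τ * q)) :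
    ¬ ∃ m n w : ℕ, 0 < m ∧ 0 < n ∧ 0 < w ∧ m ≤ M ∧
      Real.log (A * q / (distNearestInt (μ * q) - M * distNearestInt (τ * q))) /
        Real.log B ≤ (w : ℝ) ∧
      0 < |(m : ℝ) * τ - (n : ℝ) + μ| ∧
      |(m : ℝ) * τ - (n : ℝ) + μ| < A * B ^ (-(w : ℤ)) := by
  rintro ⟨m, n, w, hm, hn, hw, hmM, hwlog, hDpos, hDlt⟩
  set ε := distNearestInt (μ * q) - M * distNearestInt (τ * q) with hεdef
  have hq0 : (0 : ℝ) < q := by exact_mod_cast hq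
  have hB0 : (0 : ℝ) < B := lt_trans one_pos hB
  have hlogB : 0 < Real.log B := Real.log_pos hB
  have hAq : 0 < A * q / ε := by positivity
  -- B^w ≥ A*q/ε
  have h1 : Real.log (A * q / ε) ≤ (w : ℝ) * Real.log B := by
    rw [div_le_iff₀ hlogB] at hwlog; linarith
  have h2 : A * q / ε ≤ B ^ w := by
    calc A * q / ε = Real.exp (Real.log (A * q / ε)) := (Real.exp_log hAq).symm
      _ ≤ Real.exp ((w : ℝ) * Real.log B) := Real.exp_le_exp.mpr h1
      _ = B ^ w := by
          rw [← Real.log_pow, Real.exp_log (pow_pos hB0 w)]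
  have h3 : A * B ^ (-(w : ℤ)) ≤ ε / q := by
    rw [zpow_neg, zpow_natCast, ← div_eq_mul_inv,
      div_le_div_iff₀ (pow_pos hB0 w) hq0]
    rw [div_le_iff₀ hε] at h2
    linarith
  -- the key lower bound: ε ≤ q * |D|
  set D := (m : ℝ) * τ - (n : ℝ) + μ with hDdef
  set r : ℤ := round (τ * q) with hr
  have key : distNearestInt (μ * q) ≤ |μ * q - ((n * q - m * r : ℤ) : ℝ)| :=
    distNearestInt_le _ _
  have heq : μ * q - ((n * q - m * r : ℤ) : ℝ) = q * D - m * (τ * q - (r : ℝ)) := by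
    push_cast; ring
  have key2 : distNearestInt (μ * q) ≤ (q : ℝ) * |D| + m * distNearestInt (τ * q) := by
    rw [heq] at key
    have habs : |(q : ℝ) * D - m * (τ * q - (r : ℝ))| ≤
        |(q : ℝ) * D| + (m : ℝ) * |τ * q - (r : ℝ)| := by
      calc |(q : ℝ) * D - m * (τ * q - (r : ℝ))|
          ≤ |(q : ℝ) * D| + |(m : ℝ) * (τ * q - (r : ℝ))| := abs_sub _ _
        _ = |(q : ℝ) * D| + (m : ℝ) * |τ * q - (r : ℝ)| := by
            congr 1; rw [abs_mul, abs_of_nonneg (by positivity : (0:ℝ) ≤ (m : ℝ))]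
    have : |(q : ℝ) * D| = (q : ℝ) * |D| := by
      rw [abs_mul, abs_of_pos hq0]
    have hdn : distNearestInt (τ * q) = |τ * q - (r : ℝ)| := rfl
    rw [hdn]
    linarith [key, habs, this.le, this.ge]
  have hmMr : (m : ℝ) ≤ (M : ℝ) := by exact_mod_cast hmM
  have hlb : ε ≤ (q : ℝ) * |D| := by
    have hnn := distNearestInt_nonneg (τ * q)
    nlinarith [key2]
  -- upper bound
  have hub : (q : ℝ) * |D| < ε := by
    have : |D| < ε / q := lt_of_lt_of_le hDlt h3
    calc (q : ℝ) * |D| < (q : ℝ) * (ε / q) := by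
          exact (mul_lt_mul_iff_right₀ hq0).mpr this
      _ = ε := by field_simp
  linarith
end

section
/- Let M be a positive integer, let τ be an irrational real number, and let p/q be a convergent of the continued fraction expansion of τ with q > 6M. Let A, B, μ be real numbers with A > 0 and B > 1, and set r := ⌊μq + 1/2⌋. If positive integers m, n, w satisfy m ≤ M, w > log(3Aq)/log B and 0 < |m·τ − n + μ| < A·B^{−w}, then m·p + r = q·n; in particular m·p ≡ −r (mod q), so m is the unique solution m₀ < q of this congruence, and if m₀ > M there is no such solution at all. -/
/-- Baker–Davenport reduction (part b), following Remark 14.3 of Dujella's book):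
let `M` be a positive integer, `τ` irrational, `p/q` a convergent of `τ`
(so `q > 0`, `gcd(p,q) = 1` and `|p − qτ| < 1/q`) with `q > 6M`, let `A > 0`,
`B > 1` and `μ` be reals, and set `r = ⌊μq + 1/2⌋`. If positive integers
`m, n, w` satisfy `m ≤ M`, `w > log(3Aq)/log B` and `0 < |mτ − n + μ| < A·B^(−w)`,
then `mp + r = qn`; in particular `mp ≡ −r (mod q)`. -/
theorem stmt_16 (M : ℕ) (hM : 0 < M) (τ : ℝ) (hτ : Irrational τ)
    (p q : ℤ) (hq : 0 < q) (hpq : Int.gcd p q = 1)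
    (hconv : |(p : ℝ) - (q : ℝ) * τ| < 1 / (q : ℝ)) (hqM : 6 * (M : ℤ) < q)
    (A B μ : ℝ) (hA : 0 < A) (hB : 1 < B)
    (m n w : ℕ) (hm : 0 < m) (hn : 0 < n) (hw : 0 < w) (hmM : m ≤ M)
    (hwlog : Real.log (3 * A * q) / Real.log B < (w : ℝ))
    (hpos : 0 < |(m : ℝ) * τ - (n : ℝ) + μ|)
    (hsmall : |(m : ℝ) * τ - (n : ℝ) + μ| < A * B ^ (-(w : ℤ))) :
    (m : ℤ) * p + ⌊μ * (q : ℝ) + 1 / 2⌋ = q * n ∧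
      (m : ℤ) * p ≡ -⌊μ * (q : ℝ) + 1 / 2⌋ [ZMOD q] := by
  set r : ℤ := ⌊μ * (q : ℝ) + 1 / 2⌋ with hr
  have hq0 : (0:ℝ) < q := by exact_mod_cast hq
  have hBpos : (0:ℝ) < B := lt_trans one_pos hB
  have hlogB : 0 < Real.log B := Real.log_pos hB
  have h3Aq : (0:ℝ) < 3 * A * q := by positivity
  have hBw : 3 * A * q < B ^ w := by
    have h := (div_lt_iff₀ hlogB).mp hwlog
    calc 3 * A * q = Real.exp (Real.log (3 * A * q)) := (Real.exp_log h3Aq).symm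
      _ < Real.exp ((w : ℝ) * Real.log B) := Real.exp_lt_exp.mpr h
      _ = B ^ w := by
          rw [← Real.log_pow, Real.exp_log (by positivity)]
  have hz : A * B ^ (-(w : ℤ)) < 1 / (3 * q) := by
    rw [zpow_neg, zpow_natCast, ← div_eq_mul_inv,
        div_lt_div_iff₀ (by positivity) (by positivity)]
    nlinarith
  -- three bounds
  have h1 : (q : ℝ) * |(m : ℝ) * τ - (n : ℝ) + μ| < 1 / 3 := by
    have : (q : ℝ) * |(m : ℝ) * τ - (n : ℝ) + μ| < q * (1 / (3 * q)) := by
      apply mul_lt_mul_of_pos_left (lt_trans hsmall hz) hq0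
    have e : (q : ℝ) * (1 / (3 * q)) = 1 / 3 := by
      field_simp
    rw [e] at this
    exact this
  have hmq : (m : ℝ) ≤ M := by exact_mod_cast hmM
  have hMq : 6 * (M : ℝ) < q := by exact_mod_cast hqM
  have h2 : (m : ℝ) * |(p : ℝ) - (q : ℝ) * τ| < 1 / 6 := by
    have hm0 : (0:ℝ) < m := by exact_mod_cast hm
    have habs : 0 ≤ |(p : ℝ) - (q : ℝ) * τ| := abs_nonneg _
    have : (m : ℝ) * |(p : ℝ) - (q : ℝ) * τ| < m * (1 / q) :=
      mul_lt_mul_of_pos_left hconv hm0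
    have h6 : (m : ℝ) * (1 / q) ≤ 1 / 6 := by
      rw [mul_one_div, div_le_div_iff₀ hq0 (by norm_num)]
      nlinarith
    linarith
  have h3 : |(r : ℝ) - μ * q| ≤ 1 / 2 := by
    have hl : (r : ℝ) ≤ μ * q + 1 / 2 := Int.floor_le _
    have hu : μ * q + 1 / 2 < r + 1 := Int.lt_floor_add_one _
    rw [abs_le]
    constructor <;> linarith
  -- key identity
  have key : ((↑m * p + r - q * ↑n : ℤ) : ℝ) =
      (q : ℝ) * ((m : ℝ) * τ - (n : ℝ) + μ) + (m : ℝ) * ((p : ℝ) - (q : ℝ) * τ)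
        + ((r : ℝ) - μ * q) := by
    push_cast
    ring
  have habs : |((↑m * p + r - q * ↑n : ℤ) : ℝ)| < 1 := by
    rw [key]
    calc |(q : ℝ) * ((m : ℝ) * τ - (n : ℝ) + μ) + (m : ℝ) * ((p : ℝ) - (q : ℝ) * τ)
          + ((r : ℝ) - μ * q)|
        ≤ |(q : ℝ) * ((m : ℝ) * τ - (n : ℝ) + μ)| + |(m : ℝ) * ((p : ℝ) - (q : ℝ) * τ)|
          + |(r : ℝ) - μ * q| := by
          exact (abs_add_le _ _).trans (by gcongr; exact abs_add_le _ _)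
      _ = (q : ℝ) * |(m : ℝ) * τ - (n : ℝ) + μ| + (m : ℝ) * |(p : ℝ) - (q : ℝ) * τ|
          + |(r : ℝ) - μ * q| := by
          rw [abs_mul, abs_mul, abs_of_pos hq0, abs_of_nonneg (by positivity : (0:ℝ) ≤ (m:ℝ))]
      _ < 1 / 3 + 1 / 6 + 1 / 2 := by linarith
      _ = 1 := by norm_num
  have hint : (↑m * p + r - q * ↑n : ℤ) = 0 := by
    have h' : |(↑m * p + r - q * ↑n : ℤ)| < 1 := by exact_mod_cast habs
    exact Int.abs_lt_one_iff.mp h'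
  have heq : (m : ℤ) * p + r = q * n := by linarith [hint]
  refine ⟨heq, ?_⟩
  have : (q : ℤ) ∣ (-r - (m : ℤ) * p) := ⟨-n, by linear_combination -heq⟩
  exact (Int.modEq_iff_dvd.mpr this)
end

section
/- Let b = g = 10. The solutions (ε₁, ε₂, d₁, d₂, l, m, n) of the equations (10+ε₁)·10^n + ε₂ = d₁·(10^l−1)/9 + d₂·(10^m−1)/9, with ε₁, ε₂ ∈ {1, −1}, integers 1 ≤ d₁, d₂ ≤ 9, 1 ≤ l ≤ m and n ≥ 1, are exactly the following: the infinite family (ε₁, ε₂) = (−1, −1), (d₁, d₂, l, m, n) = (1, 8, n, n+1, n) for n ≥ 1, and the single additional solution (ε₁, ε₂) = (−1, 1), (d₁, d₂, l, m, n) = (3, 8, 1, 2, 1), i.e. 9·10 + 1 = 3·(10−1)/9 + 8·(10²−1)/9. -/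
/-- For `b = g = 10`: the solutions of
`(10 + ε₁)·10^n + ε₂ = d₁·(10^l−1)/9 + d₂·(10^m−1)/9` with `ε₁, ε₂ ∈ {1, −1}`,
`1 ≤ d₁, d₂ ≤ 9`, `1 ≤ l ≤ m` and `n ≥ 1` are exactly the infinite family
`(ε₁, ε₂) = (−1, −1)`, `(d₁, d₂, l, m, n) = (1, 8, n, n+1, n)` and the single
additional solution `(ε₁, ε₂) = (−1, 1)`, `(d₁, d₂, l, m, n) = (3, 8, 1, 2, 1)`,
i.e. `9·10 + 1 = 3·(10−1)/9 + 8·(10²−1)/9`. -/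
theorem stmt_18 (ε₁ ε₂ : ℤ) (hε₁ : ε₁ = 1 ∨ ε₁ = -1) (hε₂ : ε₂ = 1 ∨ ε₂ = -1)
    (d₁ d₂ : ℤ) (l m n : ℕ)
    (hd₁ : 1 ≤ d₁) (hd₁' : d₁ ≤ 9) (hd₂ : 1 ≤ d₂) (hd₂' : d₂ ≤ 9)
    (hl : 1 ≤ l) (hlm : l ≤ m) (hn : 1 ≤ n) :
    ((10 + ε₁) * 10 ^ n + ε₂ =
        d₁ * (((10 : ℤ) ^ l - 1) / 9) + d₂ * (((10 : ℤ) ^ m - 1) / 9)) ↔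
      ((ε₁ = -1 ∧ ε₂ = -1 ∧ d₁ = 1 ∧ d₂ = 8 ∧ l = n ∧ m = n + 1) ∨
       (ε₁ = -1 ∧ ε₂ = 1 ∧ d₁ = 3 ∧ d₂ = 8 ∧ l = 1 ∧ m = 2 ∧ n = 1)) := by
  have hdvd : ∀ k : ℕ, (9:ℤ) ∣ 10 ^ k - 1 := fun k => by
    simpa using sub_dvd_pow_sub_pow (10:ℤ) 1 k
  obtain ⟨a, ha⟩ := hdvd l
  obtain ⟨b, hb⟩ := hdvd m
  have ea : ((10:ℤ)^l - 1)/9 = a := by rw [ha]; exact Int.mul_ediv_cancel_left _ (by norm_num)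
  have eb : ((10:ℤ)^m - 1)/9 = b := by rw [hb]; exact Int.mul_ediv_cancel_left _ (by norm_num)
  have pn : (10:ℤ) ≤ 10 ^ n := by
    calc (10:ℤ) = 10^1 := by norm_num
    _ ≤ 10^n := pow_le_pow_right₀ (by norm_num) hn
  have pl : (10:ℤ) ≤ 10 ^ l := by
    calc (10:ℤ) = 10^1 := by norm_num
    _ ≤ 10^l := pow_le_pow_right₀ (by norm_num) hl
  have pm : (10:ℤ) ≤ 10 ^ m := le_trans pl (pow_le_pow_right₀ (by norm_num) hlm)
  have he₁ : -1 ≤ ε₁ ∧ ε₁ ≤ 1 := by rcases hε₁ with h|h <;> omega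
  have he₂ : -1 ≤ ε₂ ∧ ε₂ ≤ 1 := by rcases hε₂ with h|h <;> omega
  rw [ea, eb]
  constructor
  · intro h
    have E9 : 9 * ((10 + ε₁) * 10 ^ n + ε₂) = d₁ * (10^l - 1) + d₂ * (10^m - 1) := by
      rw [ha, hb]; linear_combination 9 * h
    have lb₁ : 9 ≤ d₁ * (10^l - 1) := by
      have := mul_le_mul hd₁ (show (9:ℤ) ≤ 10^l - 1 by linarith) (by norm_num) (by linarith)
      linarith
    have lb₂ : 10^m - 1 ≤ d₂ * (10^m - 1) :=
      le_mul_of_one_le_left (by linarith) hd₂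
    have hε₁n : ε₁ * 10^n ≤ 1 * 10^n := mul_le_mul_of_nonneg_right he₁.2 (by linarith)
    have hε₁n' : (-1 : ℤ) * 10^n ≤ ε₁ * 10^n := mul_le_mul_of_nonneg_right he₁.1 (by linarith)
    -- m ≤ n + 1
    have hm1 : m ≤ n + 1 := by
      by_contra hc
      have h2 : (10:ℤ)^(n+2) ≤ 10^m := pow_le_pow_right₀ (by norm_num) (by omega)
      have h3 : (10:ℤ)^(n+2) = 100 * 10^n := by ring
      linarith
    -- n + 1 ≤ m
    have hm2 : n + 1 ≤ m := by
      by_contra hc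
      have hmn : (10:ℤ)^m ≤ 10^n := pow_le_pow_right₀ (by norm_num) (by omega)
      have hln : (10:ℤ)^l ≤ 10^n := pow_le_pow_right₀ (by norm_num) (by omega)
      have ub₁ : d₁ * (10^l - 1) ≤ 9 * (10^n - 1) :=
        mul_le_mul hd₁' (by linarith) (by linarith) (by norm_num)
      have ub₂ : d₂ * (10^m - 1) ≤ 9 * (10^n - 1) :=
        mul_le_mul hd₂' (by linarith) (by linarith) (by norm_num)
      linarith
    have hm : m = n + 1 := by omega
    subst hm
    have hten : (10:ℤ)^(n+1) = 10 * 10^n := by ring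
    have D : d₁ * ((10:ℤ)^l - 1) = (9*(10+ε₁) - 10*d₂) * 10^n + 9*ε₂ + d₂ := by
      linear_combination -E9 - d₂ * hten
    rcases hε₁ with h1 | h1
    · -- ε₁ = 1 : contradiction
      exfalso
      subst h1
      have hln : l = n + 1 := by
        by_contra hc
        have hln' : (10:ℤ)^l ≤ 10^n := pow_le_pow_right₀ (by norm_num) (by omega)
        have ub₁ : d₁ * (10^l - 1) ≤ 9 * (10^n - 1) :=
          mul_le_mul hd₁' (by linarith) (by linarith) (by norm_num)
        have hx : 0 ≤ (90 - 10*d₂) * 10^n := mul_nonneg (by linarith) (by linarith)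
        linarith
      subst hln
      have K : (10*d₁ + 10*d₂ - 99) * 10^n = d₁ + d₂ + 9*ε₂ := by
        linear_combination D - d₁ * hten
      rcases le_or_gt (d₁ + d₂) 9 with hs | hs
      · have hx : (10*d₁ + 10*d₂ - 99) * 10^n ≤ (-9) * 10^n :=
          mul_le_mul_of_nonneg_right (by linarith) (by linarith)
        linarith
      · rcases le_or_gt (d₁ + d₂) 10 with ht | ht
        · have hk : 10*d₁ + 10*d₂ - 99 = 1 := by omega
          rw [hk, one_mul] at K
          obtain ⟨t, htt⟩ : (10:ℤ) ∣ 10^n := dvd_pow_self 10 (by omega)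
          rw [htt] at K pn
          rcases hε₂ with h2 | h2 <;> omega
        · have hx : (11:ℤ) * 10^n ≤ (10*d₁ + 10*d₂ - 99) * 10^n :=
            mul_le_mul_of_nonneg_right (by omega) (by linarith)
          linarith
    · -- ε₁ = -1
      subst h1
      have D' : d₁ * ((10:ℤ)^l - 1) = (81 - 10*d₂) * 10^n + 9*ε₂ + d₂ := by
        linear_combination D
      have hd2 : d₂ = 9 ∨ d₂ ≤ 7 ∨ d₂ = 8 := by omega
      rcases hd2 with h9 | h7 | h8
      · exfalso; subst h9; linarith
      · exfalso
        have hln : l = n + 1 := by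
          by_contra hc
          have hln' : (10:ℤ)^l ≤ 10^n := pow_le_pow_right₀ (by norm_num) (by omega)
          have ub₁ : d₁ * (10^l - 1) ≤ 9 * (10^n - 1) :=
            mul_le_mul hd₁' (by linarith) (by linarith) (by norm_num)
          have hx : 0 ≤ (70 - 10*d₂) * 10^n := mul_nonneg (by linarith) (by linarith)
          linarith
        subst hln
        have K : (10*d₁ + 10*d₂ - 81) * 10^n = d₁ + d₂ + 9*ε₂ := by
          linear_combination D' - d₁ * hten
        rcases le_or_gt (d₁ + d₂) 8 with hs | hs
        · have hx : (10*d₁ + 10*d₂ - 81) * 10^n ≤ (-1) * 10^n :=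
            mul_le_mul_of_nonneg_right (by linarith) (by linarith)
          linarith
        · have hx : (9:ℤ) * 10^n ≤ (10*d₁ + 10*d₂ - 81) * 10^n :=
            mul_le_mul_of_nonneg_right (by omega) (by linarith)
          linarith
      · subst h8
        have hlcase : l = n ∨ l = n + 1 ∨ l + 1 ≤ n := by omega
        rcases hε₂ with h2 | h2
        · -- ε₂ = 1, the sporadic solution
          subst h2
          have Dx : d₁ * ((10:ℤ)^l - 1) = 10^n + 17 := by linear_combination D'
          have hln : l = n := by
            rcases hlcase with hq | hq | hq
            · exact hq
            · exfalso; subst hq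
              have hlb : 10^(n+1) - 1 ≤ d₁ * ((10:ℤ)^(n+1) - 1) :=
                le_mul_of_one_le_left (by linarith) hd₁
              linarith
            · exfalso
              have hln' : (10:ℤ)^(l+1) ≤ 10^n := pow_le_pow_right₀ (by norm_num) hq
              have h10l : (10:ℤ)^(l+1) = 10 * 10^l := by ring
              have ub : d₁ * ((10:ℤ)^l - 1) ≤ 9 * (10^l - 1) :=
                mul_le_mul_of_nonneg_right hd₁' (by linarith)
              linarith
          rw [hln] at Dx
          have K' : (d₁ - 1) * (10:ℤ)^n = d₁ + 17 := by linear_combination Dx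
          have hd1 : 2 ≤ d₁ := by
            by_contra hc
            have : d₁ = 1 := by omega
            rw [this] at K'; linarith
          have hn26 : (10:ℤ)^n ≤ 26 := by
            have := le_mul_of_one_le_left (show (0:ℤ) ≤ 10^n by linarith)
              (show (1:ℤ) ≤ d₁ - 1 by linarith)
            linarith
          have hn1 : n = 1 := by
            by_contra hc
            have : (10:ℤ)^2 ≤ 10^n := pow_le_pow_right₀ (by norm_num) (by omega)
            norm_num at this; linarith
          subst hn1
          norm_num at K'
          right
          exact ⟨rfl, rfl, by linarith, rfl, hln, rfl, rfl⟩
        · -- ε₂ = -1, the infinite family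
          subst h2
          have Dx : d₁ * ((10:ℤ)^l - 1) = 10^n - 1 := by linear_combination D'
          have hln : l = n := by
            rcases hlcase with hq | hq | hq
            · exact hq
            · exfalso; subst hq
              have hlb : 10^(n+1) - 1 ≤ d₁ * ((10:ℤ)^(n+1) - 1) :=
                le_mul_of_one_le_left (by linarith) hd₁
              linarith
            · exfalso
              have hln' : (10:ℤ)^(l+1) ≤ 10^n := pow_le_pow_right₀ (by norm_num) hq
              have h10l : (10:ℤ)^(l+1) = 10 * 10^l := by ring
              have ub : d₁ * ((10:ℤ)^l - 1) ≤ 9 * (10^l - 1) :=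
                mul_le_mul_of_nonneg_right hd₁' (by linarith)
              linarith
          rw [hln] at Dx
          have hd1 : d₁ = 1 := by
            by_contra hc
            have h2d : 2 ≤ d₁ := by omega
            have := le_mul_of_one_le_left (show (0:ℤ) ≤ 10^n - 1 by linarith)
              (show (1:ℤ) ≤ d₁ by linarith)
            nlinarith
          left
          exact ⟨rfl, rfl, hd1, rfl, hln, rfl⟩
  · rintro (⟨h1, h2, h3, h4, h5, h6⟩ | ⟨h1, h2, h3, h4, h5, h6, h7⟩)
    · subst h1; subst h2; subst h3; subst h4; subst h5; subst h6
      have hp : (10:ℤ)^(l+1) = 10 * 10^l := by ring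
      linarith [ha, hb]
    · subst h1; subst h2; subst h3; subst h4; subst h5; subst h6; subst h7
      norm_num at ha hb ⊢
      omega
end
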